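/- Let f : ℝ≥0 → ℝ≥0 be non-increasing with non-decreasing work, p ≥ 1, C > 0, γ the critical speed with f(γ) ≤ C. For a finite set S of machines with speeds s_i ≥ 0, let σ_p(S) := (Σ_{i∈S} s_i^p)^{1/p} and x_i := s_i^p / σ_p(S)^p. Then: (1) if f(s_i) ≤ C, then f(s_i) * x_i ≤ f(σ_p(S)); (2) if f(s_i) > C and σ_p(S) ≥ γ, then f(γ) * (γ/s_i)^p * x_i ≤ f(σ_p(S)). -/

import Mathlib

open NNReal

lemma work_rpow_mono (f : ℝ≥0 → ℝ≥0)
    (hwork : Monotone fun s => s * f s) {p : ℝ} (hp : 1 ≤ p) {a b : ℝ≥0}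
    (hab : a ≤ b) : f a * a ^ p ≤ f b * b ^ p := by
  rcases eq_or_ne a 0 with rfl | ha
  · rw [NNReal.zero_rpow (by positivity : p ≠ 0), mul_zero]
    exact zero_le
  · have hb : b ≠ 0 := fun hb => ha (le_antisymm (hb ▸ hab) zero_le)
    have key : ∀ c : ℝ≥0, c ≠ 0 → f c * c ^ p = (c * f c) * c ^ (p - 1) := by
      intro c hc
      rw [show p = 1 + (p - 1) by ring, NNReal.rpow_add hc, NNReal.rpow_one]
      ring_nf
    rw [key a ha, key b hb]
    exact mul_le_mul (hwork hab) (NNReal.rpow_le_rpow hab (by linarith))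
      zero_le zero_le

theorem stmt_13 {ι : Type*} (f : ℝ≥0 → ℝ≥0) (hf : Antitone f)
    (hwork : Monotone fun s => s * f s)
    (p : ℝ) (hp : 1 ≤ p)
    (C : ℝ≥0) (hC : 0 < C)
    (γ : ℕ) (hγ : f γ ≤ C) (hγmin : ∀ q : ℕ, f q ≤ C → γ ≤ q)
    (S : Finset ι) (s : ι → ℝ≥0)
    (i : ι) (hi : i ∈ S) :
    (f (s i) ≤ C →
      f (s i) * (s i ^ p / ((∑ i ∈ S, s i ^ p) ^ (1 / p)) ^ p)
        ≤ f ((∑ i ∈ S, s i ^ p) ^ (1 / p))) ∧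
    (C < f (s i) → (γ : ℝ≥0) ≤ (∑ i ∈ S, s i ^ p) ^ (1 / p) →
      f γ * ((γ : ℝ≥0) / s i) ^ p * (s i ^ p / ((∑ i ∈ S, s i ^ p) ^ (1 / p)) ^ p)
        ≤ f ((∑ i ∈ S, s i ^ p) ^ (1 / p))) := by
  have hp0 : p ≠ 0 := by positivity
  set T : ℝ≥0 := ∑ i ∈ S, s i ^ p with hT
  set σ : ℝ≥0 := T ^ (1 / p) with hσ
  have hσp : σ ^ p = T := by
    rw [hσ, ← NNReal.rpow_mul, one_div_mul_cancel hp0, NNReal.rpow_one]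
  have hiT : s i ^ p ≤ T := Finset.single_le_sum (f := fun j => s j ^ p) (fun j _ => zero_le) hi
  have hsiσ : s i ≤ σ := by
    have := NNReal.rpow_le_rpow hiT (le_of_lt (by positivity : (0:ℝ) < 1 / p))
    rwa [← NNReal.rpow_mul, mul_one_div_cancel hp0, NNReal.rpow_one] at this
  rcases eq_or_ne T 0 with hT0 | hT0
  · have hsi0 : s i ^ p = 0 := le_antisymm (hT0 ▸ hiT) zero_le
    constructor <;> intro _ <;> [skip; intro _] <;>
      simp [hσp, hT0, hsi0]
  constructor
  · intro _
    rw [hσp, mul_div_assoc', div_le_iff₀ (pos_iff_ne_zero.mpr hT0), ← hσp]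
    exact work_rpow_mono f hwork hp hsiσ
  · intro _ hγσ
    rw [hσp, mul_div_assoc', div_le_iff₀ (pos_iff_ne_zero.mpr hT0), ← hσp]
    calc f ↑γ * (↑γ / s i) ^ p * s i ^ p
        = f ↑γ * ((↑γ / s i) ^ p * s i ^ p) := by ring
      _ ≤ f ↑γ * (↑γ : ℝ≥0) ^ p := by
          gcongr
          rw [NNReal.div_rpow]
          rcases eq_or_ne (s i) 0 with hs | hs
          · simp [hs, NNReal.zero_rpow hp0]
          · rw [div_mul_cancel₀ _ (by simp [NNReal.rpow_eq_zero_iff, hs])]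
      _ ≤ f σ * σ ^ p := work_rpow_mono f hwork hp hγσ
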